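/- Let γ ∈ (d, d+2], let Ω ⊆ ℝ^d be open, let u ∈ C^{(γ−d)/2}(Ω) ∩ L_∞(Ω) and let v ∈ L²(Ω) ∩ L_∞(Ω). Then |||u v|||_{M,γ}² ≤ 2 ‖u‖_{L_∞(Ω)}² |||v|||_{M,γ}² + 2^{1+γ−d} ω_d ‖v‖_{L_∞(Ω)}² |||u|||_{C^{(γ−d)/2}(Ω)}² + 2^{γ} ω_d ‖u‖_{L_∞(Ω)}² ‖v‖_{L_∞(Ω)}². -/

import Mathlib

open MeasureTheory Metric ENNReal

/-- The Campanato seminorm `|||u|||_{M,γ}` (with `Re = 1`) of a function `u`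
on an open set `Ω ⊆ ℝ^d`. -/
noncomputable def campanatoSeminorm (d : ℕ) (Ω : Set (EuclideanSpace ℝ (Fin d)))
    (γ : ℝ) (u : EuclideanSpace ℝ (Fin d) → ℂ) : ℝ≥0∞ :=
  ⨆ x ∈ closure Ω, ⨆ r ∈ Set.Ioc (0 : ℝ) 1,
    (ENNReal.ofReal (r ^ (-γ)) *
      ∫⁻ y in Ω ∩ ball x r,
        (‖u y - ⨍ z in Ω ∩ ball x r, u z‖₊ : ℝ≥0∞) ^ 2) ^ (1/2 : ℝ)

/-- The Hölder seminorm `|||u|||_{C^ν(S)} = sup { |u(x)−u(y)|/|x−y|^ν :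
x, y ∈ S, 0 < |x−y| ≤ 1 }`. -/
noncomputable def holderSeminorm (d : ℕ) (ν : ℝ) (S : Set (EuclideanSpace ℝ (Fin d)))
    (u : EuclideanSpace ℝ (Fin d) → ℂ) : ℝ≥0∞ :=
  ⨆ x ∈ S, ⨆ y ∈ S, ⨆ (_ : x ≠ y ∧ dist x y ≤ 1),
    ENNReal.ofReal (‖u x - u y‖ / dist x y ^ ν)

/-- The sup norm of `u` on `Ω`, as the `L_∞(Ω)` norm. -/
noncomputable def linftyNorm (d : ℕ) (Ω : Set (EuclideanSpace ℝ (Fin d)))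
    (u : EuclideanSpace ℝ (Fin d) → ℂ) : ℝ≥0∞ :=
  eLpNorm u ⊤ (volume.restrict Ω)

private lemma lintegral_sq_eq_ofReal {α : Type*} [MeasurableSpace α] (μ : Measure α)
    {g : α → ℂ} (hg : Integrable (fun y => ‖g y‖^2) μ) :
    ∫⁻ y, (‖g y‖₊ : ℝ≥0∞) ^ 2 ∂μ = ENNReal.ofReal (∫ y, ‖g y‖^2 ∂μ) := by
  rw [ofReal_integral_eq_lintegral_ofReal hg (ae_of_all _ fun y => sq_nonneg _)]
  simp_rw [ENNReal.ofReal_pow (norm_nonneg _), ofReal_norm, enorm_eq_nnnorm]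

private lemma sq_norm_complex (z : ℂ) : ‖z‖^2 = z.re^2 + z.im^2 := by
  rw [Complex.sq_norm, Complex.normSq_apply]; ring

private lemma memLp_sq_integrable {α : Type*} [MeasurableSpace α] {μ : Measure α}
    {g : α → ℂ} (hg : MemLp g 2 μ) : Integrable (fun y => ‖g y‖^2) μ := by
  have := hg.integrable_norm_rpow two_ne_zero ENNReal.ofNat_ne_top
  simpa [ENNReal.toReal_ofNat, Real.rpow_natCast] using this

private lemma lintegral_sq_sub_average_le {α : Type*} [MeasurableSpace α] (μ : Measure α)
    [IsFiniteMeasure μ] {f : α → ℂ} (hf : MemLp f 2 μ) :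
    ∫⁻ y, (‖f y - ⨍ z, f z ∂μ‖₊ : ℝ≥0∞) ^ 2 ∂μ ≤ ∫⁻ y, (‖f y‖₊ : ℝ≥0∞) ^ 2 ∂μ := by
  by_cases hμ : μ = 0
  · simp [hμ]
  set m := ⨍ z, f z ∂μ with hm
  set T := (μ Set.univ).toReal with hTdef
  have hT : 0 < T := ENNReal.toReal_pos (Measure.measure_univ_ne_zero.mpr hμ) (measure_ne_top μ _)
  have h1 : Integrable f μ := hf.integrable one_le_two
  have h2 : Integrable (fun y => ‖f y‖^2) μ := memLp_sq_integrable hf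
  have h3 : Integrable (fun y => ‖f y - m‖^2) μ := memLp_sq_integrable (hf.sub (memLp_const m))
  have hintf : ∫ y, f y ∂μ = T • m := by
    rw [hm, average_eq, measureReal_def, ← hTdef, smul_smul, mul_inv_cancel₀ hT.ne', one_smul]
  rw [lintegral_sq_eq_ofReal μ h3, lintegral_sq_eq_ofReal μ h2]
  apply ENNReal.ofReal_le_ofReal
  have hre : Integrable (fun y => (f y).re) μ := h1.re
  have him : Integrable (fun y => (f y).im) μ := h1.im
  have expand : ∀ y, ‖f y - m‖^2 =
      ‖f y‖^2 + ((-2*m.re)*(f y).re + ((-2*m.im)*(f y).im + ‖m‖^2)) := by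
    intro y
    rw [sq_norm_complex, sq_norm_complex, sq_norm_complex]
    simp only [Complex.sub_re, Complex.sub_im]; ring
  have hIre : ∫ y, (f y).re ∂μ = T * m.re := by
    have := integral_re (𝕜 := ℂ) h1
    simp only [RCLike.re_to_complex] at this
    rw [this, hintf]; simp [Complex.smul_re]
  have hIim : ∫ y, (f y).im ∂μ = T * m.im := by
    have := integral_im (𝕜 := ℂ) h1
    simp only [RCLike.im_to_complex] at this
    rw [this, hintf]; simp [Complex.smul_im]
  calc ∫ y, ‖f y - m‖^2 ∂μ
      = ∫ y, ‖f y‖^2 ∂μ + ((-2*m.re) * ∫ y, (f y).re ∂μ +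
          ((-2*m.im) * ∫ y, (f y).im ∂μ + T * ‖m‖^2)) := by
        have hC : Integrable (fun y => (-2*m.im)*(f y).im + ‖m‖^2) μ :=
          (him.const_mul (-2*m.im)).add (integrable_const (‖m‖^2))
        have hB : Integrable (fun y => (-2*m.re)*(f y).re + ((-2*m.im)*(f y).im + ‖m‖^2)) μ :=
          (hre.const_mul (-2*m.re)).add hC
        simp_rw [expand]
        rw [integral_add h2 hB, integral_add (hre.const_mul (-2*m.re)) hC,
          integral_add (him.const_mul (-2*m.im)) (integrable_const (‖m‖^2)),
          integral_const_mul, integral_const_mul, integral_const, smul_eq_mul, measureReal_def, ← hTdef]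
    _ ≤ ∫ y, ‖f y‖^2 ∂μ := by
        rw [hIre, hIim, sq_norm_complex]
        nlinarith [hT.le, sq_nonneg m.re, sq_nonneg m.im, mul_nonneg hT.le (sq_nonneg m.re),
          mul_nonneg hT.le (sq_nonneg m.im)]

private lemma ennreal_add_sq_le (a b : ℝ≥0∞) : (a + b)^2 ≤ 2*a^2 + 2*b^2 := by
  rcases eq_or_ne a ⊤ with ha | ha
  · have h : 2*a^2 + 2*b^2 = ⊤ := by
      rw [ha, ENNReal.add_eq_top]
      left
      rw [ENNReal.mul_eq_top]
      left
      exact ⟨by norm_num, by simp⟩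
    simp [h]
  rcases eq_or_ne b ⊤ with hb | hb
  · have h : 2*a^2 + 2*b^2 = ⊤ := by
      rw [hb, ENNReal.add_eq_top]
      right
      rw [ENNReal.mul_eq_top]
      left
      exact ⟨by norm_num, by simp⟩
    simp [h]
  lift a to NNReal using ha
  lift b to NNReal using hb
  have h' : (a + b)^2 ≤ 2*a^2 + 2*b^2 := by
    rw [← NNReal.coe_le_coe]; push_cast; nlinarith [sq_nonneg ((a:ℝ) - b)]
  exact_mod_cast h'

private lemma campanato_bound (d : ℕ) (γ : ℝ) (Ω : Set (EuclideanSpace ℝ (Fin d)))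
    (w : EuclideanSpace ℝ (Fin d) → ℂ) {x : EuclideanSpace ℝ (Fin d)} {r : ℝ}
    (hx : x ∈ closure Ω) (hr : r ∈ Set.Ioc (0:ℝ) 1) :
    ENNReal.ofReal (r ^ (-γ)) *
      ∫⁻ y in Ω ∩ ball x r, (‖w y - ⨍ z in Ω ∩ ball x r, w z‖₊ : ℝ≥0∞) ^ 2 ≤
      campanatoSeminorm d Ω γ w ^ 2 := by
  have h : (ENNReal.ofReal (r ^ (-γ)) *
      ∫⁻ y in Ω ∩ ball x r, (‖w y - ⨍ z in Ω ∩ ball x r, w z‖₊ : ℝ≥0∞) ^ 2) ^ (1/2:ℝ) ≤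
      campanatoSeminorm d Ω γ w := by
    unfold campanatoSeminorm
    have h1 := le_biSup (f := fun r : ℝ => (ENNReal.ofReal (r ^ (-γ)) *
      ∫⁻ y in Ω ∩ ball x r, (‖w y - ⨍ z in Ω ∩ ball x r, w z‖₊ : ℝ≥0∞) ^ 2) ^ (1/2:ℝ)) hr
    have h2 := le_biSup (f := fun x => ⨆ r ∈ Set.Ioc (0:ℝ) 1, (ENNReal.ofReal (r ^ (-γ)) *
      ∫⁻ y in Ω ∩ ball x r, (‖w y - ⨍ z in Ω ∩ ball x r, w z‖₊ : ℝ≥0∞) ^ 2) ^ (1/2:ℝ)) hx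
    exact h1.trans h2
  calc ENNReal.ofReal (r ^ (-γ)) *
      ∫⁻ y in Ω ∩ ball x r, (‖w y - ⨍ z in Ω ∩ ball x r, w z‖₊ : ℝ≥0∞) ^ 2
      = ((ENNReal.ofReal (r ^ (-γ)) *
        ∫⁻ y in Ω ∩ ball x r, (‖w y - ⨍ z in Ω ∩ ball x r, w z‖₊ : ℝ≥0∞) ^ 2) ^ (1/2:ℝ))^2 := by
        rw [← ENNReal.rpow_natCast _ 2, ← ENNReal.rpow_mul]; norm_num
  _ ≤ _ := pow_le_pow_left' h 2

private lemma holder_bound (d : ℕ) (ν : ℝ) (Ω : Set (EuclideanSpace ℝ (Fin d)))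
    (u : EuclideanSpace ℝ (Fin d) → ℂ) (hu : holderSeminorm d ν Ω u ≠ ⊤) (hν : 0 < ν)
    {y z : EuclideanSpace ℝ (Fin d)} (hy : y ∈ Ω) (hz : z ∈ Ω) (hd : dist y z ≤ 1) :
    ‖u y - u z‖ ≤ (holderSeminorm d ν Ω u).toReal * dist y z ^ ν := by
  rcases eq_or_ne y z with rfl | hyz
  · simp [Real.zero_rpow hν.ne']
  have h1 : ENNReal.ofReal (‖u y - u z‖ / dist y z ^ ν) ≤ holderSeminorm d ν Ω u := by
    unfold holderSeminorm
    have g1 := le_iSup_of_le (f := fun _ : y ≠ z ∧ dist y z ≤ 1 =>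
      ENNReal.ofReal (‖u y - u z‖ / dist y z ^ ν)) ⟨hyz, hd⟩ le_rfl
    have g2 := le_biSup (f := fun z' => ⨆ (_ : y ≠ z' ∧ dist y z' ≤ 1),
      ENNReal.ofReal (‖u y - u z'‖ / dist y z' ^ ν)) hz
    have g3 := le_biSup (f := fun y' => ⨆ z' ∈ Ω, ⨆ (_ : y' ≠ z' ∧ dist y' z' ≤ 1),
      ENNReal.ofReal (‖u y' - u z'‖ / dist y' z' ^ ν)) hy
    exact (g1.trans g2).trans g3
  have hd0 : (0:ℝ) < dist y z := dist_pos.mpr hyz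
  have h2 : ‖u y - u z‖ / dist y z ^ ν ≤ (holderSeminorm d ν Ω u).toReal := by
    have h3 := ENNReal.toReal_mono hu h1
    rwa [ENNReal.toReal_ofReal (by positivity)] at h3
  have h4 : (0:ℝ) < dist y z ^ ν := Real.rpow_pos_of_pos hd0 ν
  calc ‖u y - u z‖ = ‖u y - u z‖ / dist y z ^ ν * dist y z ^ ν := by field_simp
  _ ≤ _ := mul_le_mul_of_nonneg_right h2 h4.le

private lemma linfty_ae {d : ℕ} (Ω A : Set (EuclideanSpace ℝ (Fin d))) (hA : A ⊆ Ω)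
    (u : EuclideanSpace ℝ (Fin d) → ℂ) :
    ∀ᵐ y ∂(volume.restrict A), (‖u y‖₊ : ℝ≥0∞) ≤ linftyNorm d Ω u := by
  have h := enorm_ae_le_eLpNormEssSup u (volume.restrict Ω)
  have h2 := ae_mono (Measure.restrict_mono hA le_rfl) h
  rw [linftyNorm, eLpNorm_exponent_top]; exact h2

theorem campanato_seminorm_mul (d : ℕ) (γ : ℝ)
    (hγ : γ ∈ Set.Ioc (d : ℝ) ((d : ℝ) + 2))
    (Ω : Set (EuclideanSpace ℝ (Fin d))) (hΩ : IsOpen Ω)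
    (u v : EuclideanSpace ℝ (Fin d) → ℂ)
    (hu_cont : ContinuousOn u Ω)
    (hu_holder : holderSeminorm d ((γ - d) / 2) Ω u ≠ ⊤)
    (hu_inf : linftyNorm d Ω u ≠ ⊤)
    (hv : MemLp v 2 (volume.restrict Ω))
    (hv_inf : linftyNorm d Ω v ≠ ⊤) :
    campanatoSeminorm d Ω γ (fun x => u x * v x) ^ 2 ≤
      ENNReal.ofReal 2 * linftyNorm d Ω u ^ 2 * campanatoSeminorm d Ω γ v ^ 2 +
      ENNReal.ofReal ((2 : ℝ) ^ (1 + γ - d)) *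
        volume (ball (0 : EuclideanSpace ℝ (Fin d)) 1) *
        linftyNorm d Ω v ^ 2 * holderSeminorm d ((γ - d) / 2) Ω u ^ 2 +
      ENNReal.ofReal ((2 : ℝ) ^ γ) *
        volume (ball (0 : EuclideanSpace ℝ (Fin d)) 1) *
        linftyNorm d Ω u ^ 2 * linftyNorm d Ω v ^ 2 := by
  obtain ⟨hγd, hγ2⟩ := hγ
  have hν0 : (0:ℝ) < (γ - d) / 2 := by linarith
  set ν := (γ - (d:ℝ)) / 2 with hνdef
  set Mu := linftyNorm d Ω u with hMu
  set Mv := linftyNorm d Ω v with hMv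
  set H := holderSeminorm d ν Ω u with hH
  set Kv := campanatoSeminorm d Ω γ v with hKvdef
  set ωd := volume (ball (0 : EuclideanSpace ℝ (Fin d)) 1) with hωd
  have key : ∀ x ∈ closure Ω, ∀ r ∈ Set.Ioc (0:ℝ) 1,
      ENNReal.ofReal (r ^ (-γ)) *
        (∫⁻ y in Ω ∩ ball x r,
          (‖u y * v y - ⨍ z in Ω ∩ ball x r, u z * v z‖₊ : ℝ≥0∞) ^ 2) ≤
      ENNReal.ofReal 2 * Mu ^ 2 * Kv ^ 2 +
        ENNReal.ofReal ((2 : ℝ) ^ (1 + γ - d)) * ωd * Mv ^ 2 * H ^ 2 +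
        ENNReal.ofReal ((2 : ℝ) ^ γ) * ωd * Mu ^ 2 * Mv ^ 2 := by
    intro x hx r hr
    obtain ⟨hr0, hr1⟩ := hr
    have h2eq : ENNReal.ofReal (2:ℝ) = 2 := by norm_num
    rw [h2eq]
    set A := Ω ∩ ball x r with hA
    have hAm : MeasurableSet A := (hΩ.inter isOpen_ball).measurableSet
    have hAΩ : A ⊆ Ω := Set.inter_subset_left
    have hres : volume.restrict A ≤ volume.restrict Ω := Measure.restrict_mono hAΩ le_rfl
    have hAball : volume A < ⊤ :=
      lt_of_le_of_lt (measure_mono Set.inter_subset_right) measure_ball_lt_top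
    haveI : IsFiniteMeasure (volume.restrict A) := by
      constructor; rwa [Measure.restrict_apply_univ]
    have hvolA : volume A ≤ ENNReal.ofReal (r ^ (d:ℝ)) * ωd := by
      rcases Nat.eq_zero_or_pos d with hd | hd
    -- d = 0 : the whole space is a subsingleton, every ball is everything
      · subst hd
        rw [hωd]
        have hsub : A ⊆ ball (0 : EuclideanSpace ℝ (Fin 0)) 1 := fun y _ => by
          rw [mem_ball, Subsingleton.elim y 0]; simpa using one_pos
        calc volume A ≤ volume (ball (0 : EuclideanSpace ℝ (Fin 0)) 1) := measure_mono hsub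
        _ = ENNReal.ofReal (r ^ ((0:ℕ):ℝ)) * volume (ball (0 : EuclideanSpace ℝ (Fin 0)) 1) := by
            simp [Real.rpow_natCast]
      · haveI : Nontrivial (EuclideanSpace ℝ (Fin d)) := by
          refine ⟨⟨WithLp.toLp 2 (fun _ => 0), WithLp.toLp 2 (fun _ => 1), fun h => ?_⟩⟩
          have := congrFun (congrArg WithLp.ofLp h) ⟨0, hd⟩
          norm_num at this
        calc volume A ≤ volume (ball x r) := measure_mono Set.inter_subset_right
        _ = ENNReal.ofReal (r ^ Module.finrank ℝ (EuclideanSpace ℝ (Fin d))) * ωd :=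
            Measure.addHaar_ball volume x hr0.le
        _ = ENNReal.ofReal (r ^ (d:ℝ)) * ωd := by
            rw [finrank_euclideanSpace_fin, Real.rpow_natCast]
    -- trivial case : null set
    by_cases hA0 : volume A = 0
    · have hz : volume.restrict A = 0 := by rwa [Measure.restrict_eq_zero]
      rw [show (∫⁻ y in A, (‖u y * v y - ⨍ z in A, u z * v z‖₊ : ℝ≥0∞) ^ 2) =
          (∫⁻ y, (‖u y * v y - ⨍ z in A, u z * v z‖₊ : ℝ≥0∞) ^ 2 ∂(volume.restrict A)) from rfl,
        hz, lintegral_zero_measure, mul_zero]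
      exact zero_le
    have hT0 : (0:ℝ) < (volume A).toReal := ENNReal.toReal_pos hA0 hAball.ne
    -- measurability and integrability
    have huA : AEStronglyMeasurable u (volume.restrict A) :=
      (hu_cont.mono hAΩ).aestronglyMeasurable hAm
    have hvA2 : MemLp v 2 (volume.restrict A) := hv.mono_measure hres
    have hvInt : Integrable v (volume.restrict A) := hvA2.integrable one_le_two
    have hub : ∀ᵐ y ∂(volume.restrict A), (‖u y‖₊ : ℝ≥0∞) ≤ Mu := linfty_ae Ω A hAΩ u
    have hvb : ∀ᵐ y ∂(volume.restrict A), (‖v y‖₊ : ℝ≥0∞) ≤ Mv := linfty_ae Ω A hAΩ v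
    have hubR : ∀ᵐ y ∂(volume.restrict A), ‖u y‖ ≤ Mu.toReal := by
      filter_upwards [hub] with y h
      have := ENNReal.toReal_mono hu_inf h
      simpa using this
    have hvbR : ∀ᵐ y ∂(volume.restrict A), ‖v y‖ ≤ Mv.toReal := by
      filter_upwards [hvb] with y h
      have := ENNReal.toReal_mono hv_inf h
      simpa using this
    have hfA : MemLp (fun z => u z * v z) 2 (volume.restrict A) := by
      apply MemLp.of_bound (huA.mul hvA2.aestronglyMeasurable) (Mu.toReal * Mv.toReal)
      filter_upwards [hubR, hvbR] with y h1 h2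
      show ‖u y * v y‖ ≤ _
      rw [norm_mul]
      exact mul_le_mul h1 h2 (norm_nonneg _) ENNReal.toReal_nonneg
    have hfInt : Integrable (fun z => u z * v z) (volume.restrict A) := hfA.integrable one_le_two
    have hKv : ENNReal.ofReal (r ^ (-γ)) *
        ∫⁻ y in A, (‖v y - ⨍ z in A, v z‖₊ : ℝ≥0∞) ^ 2 ≤ Kv ^ 2 :=
      campanato_bound d γ Ω v hx ⟨hr0, hr1⟩
    rcases le_or_gt r (1/2 : ℝ) with hhalf | hhalf
    · -- case r ≤ 1/2 : use the Hölder seminorm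
      have h2r1 : 2 * r ≤ 1 := by linarith
      have hosc : ∀ y ∈ A, ∀ z ∈ A, ‖u y - u z‖ ≤ H.toReal * (2*r)^ν := by
        intro y hy z hz
        rcases eq_or_ne y z with rfl | hyz
        · simp only [sub_self, norm_zero]
          positivity
        have hdyx : dist y x < r := mem_ball.mp hy.2
        have hdzx : dist z x < r := mem_ball.mp hz.2
        have hd2 : dist y z ≤ 2 * r := by
          have := dist_triangle y x z
          have hxz : dist x z < r := by rw [dist_comm]; exact hdzx
          linarith
        have hd1 : dist y z ≤ 1 := by linarith
        calc ‖u y - u z‖ ≤ H.toReal * dist y z ^ ν :=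
              holder_bound d ν Ω u hu_holder hν0 (hAΩ hy) (hAΩ hz) hd1
        _ ≤ H.toReal * (2*r)^ν := by
            apply mul_le_mul_of_nonneg_left _ ENNReal.toReal_nonneg
            exact Real.rpow_le_rpow dist_nonneg hd2 hν0.le
      set C : ℝ := H.toReal * (2*r)^ν * Mv.toReal with hCdef
      have hC0 : 0 ≤ C := by positivity
      have hterm2 : ∀ y ∈ A,
          (‖u y * (⨍ z in A, v z) - ⨍ z in A, u z * v z‖₊ : ℝ≥0∞) ≤ ENNReal.ofReal C := by
        intro y hy
        have heq : u y * (⨍ z in A, v z) - ⨍ z in A, u z * v z =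
            (volume A).toReal⁻¹ • ∫ z in A, (u y * v z - u z * v z) := by
          rw [average_eq, average_eq, measureReal_def, Measure.restrict_apply_univ,
            integral_sub (hvInt.const_mul (u y)) hfInt, integral_const_mul, smul_sub,
            mul_smul_comm]
        rw [← enorm_eq_nnnorm, ← ofReal_norm, heq]
        apply ENNReal.ofReal_le_ofReal
        have hw : ‖∫ z in A, (u y * v z - u z * v z)‖ ≤ C * (volume A).toReal := by
          have hw' := norm_integral_le_of_norm_le_const (μ := volume.restrict A)
            (f := fun z => u y * v z - u z * v z) (C := C) ?_
          · rwa [measureReal_def, Measure.restrict_apply_univ] at hw'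
          · filter_upwards [hvbR, ae_restrict_mem hAm] with z h1 h2
            rw [show u y * v z - u z * v z = (u y - u z) * v z by ring, norm_mul, hCdef]
            exact mul_le_mul (hosc y hy z h2) h1 (norm_nonneg _) (by positivity)
        rw [norm_smul, Real.norm_eq_abs, abs_inv, abs_of_nonneg ENNReal.toReal_nonneg]
        calc (volume A).toReal⁻¹ * ‖∫ z in A, (u y * v z - u z * v z)‖
            ≤ (volume A).toReal⁻¹ * (C * (volume A).toReal) :=
              mul_le_mul_of_nonneg_left hw (by positivity)
        _ = C := by field_simp
      have hpt : ∀ᵐ y ∂(volume.restrict A),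
          (‖u y * v y - ⨍ z in A, u z * v z‖₊ : ℝ≥0∞) ^ 2 ≤
            2 * Mu^2 * (‖v y - ⨍ z in A, v z‖₊ : ℝ≥0∞)^2 + 2 * (ENNReal.ofReal C)^2 := by
        filter_upwards [hub, ae_restrict_mem hAm] with y h1 h2
        calc (‖u y * v y - ⨍ z in A, u z * v z‖₊ : ℝ≥0∞) ^ 2
            ≤ ((‖u y * (v y - ⨍ z in A, v z)‖₊ : ℝ≥0∞) +
                (‖u y * (⨍ z in A, v z) - ⨍ z in A, u z * v z‖₊ : ℝ≥0∞))^2 := by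
              apply pow_le_pow_left'
              rw [show u y * v y - (⨍ z in A, u z * v z) =
                u y * (v y - ⨍ z in A, v z) + (u y * (⨍ z in A, v z) - ⨍ z in A, u z * v z)
                by ring]
              exact_mod_cast nnnorm_add_le _ _
          _ ≤ 2 * (‖u y * (v y - ⨍ z in A, v z)‖₊ : ℝ≥0∞)^2 +
                2 * (‖u y * (⨍ z in A, v z) - ⨍ z in A, u z * v z‖₊ : ℝ≥0∞)^2 :=
              ennreal_add_sq_le _ _
          _ ≤ 2 * Mu^2 * (‖v y - ⨍ z in A, v z‖₊ : ℝ≥0∞)^2 + 2 * (ENNReal.ofReal C)^2 := by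
              apply add_le_add
              · rw [show (2:ℝ≥0∞) * Mu^2 * (‖v y - ⨍ z in A, v z‖₊ : ℝ≥0∞)^2 =
                  2 * ((Mu * (‖v y - ⨍ z in A, v z‖₊ : ℝ≥0∞))^2) by ring]
                apply mul_le_mul_right
                apply pow_le_pow_left'
                calc (‖u y * (v y - ⨍ z in A, v z)‖₊ : ℝ≥0∞)
                    = (‖u y‖₊ : ℝ≥0∞) * (‖v y - ⨍ z in A, v z‖₊ : ℝ≥0∞) := by
                      rw [nnnorm_mul]; push_cast; ring
                _ ≤ Mu * (‖v y - ⨍ z in A, v z‖₊ : ℝ≥0∞) := mul_le_mul_left h1 _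
              · exact mul_le_mul_right (pow_le_pow_left' (hterm2 y h2) 2) 2
      have h2Mu : (2:ℝ≥0∞) * Mu^2 ≠ ⊤ := ENNReal.mul_ne_top (by norm_num)
        (ENNReal.pow_ne_top hu_inf)
      calc ENNReal.ofReal (r ^ (-γ)) *
            (∫⁻ y in A, (‖u y * v y - ⨍ z in A, u z * v z‖₊ : ℝ≥0∞) ^ 2)
          ≤ ENNReal.ofReal (r ^ (-γ)) *
            (∫⁻ y in A, (2 * Mu^2 * (‖v y - ⨍ z in A, v z‖₊ : ℝ≥0∞)^2 +
              2 * (ENNReal.ofReal C)^2)) :=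
            mul_le_mul_right (lintegral_mono_ae hpt) _
        _ = ENNReal.ofReal (r ^ (-γ)) *
            (2 * Mu^2 * (∫⁻ y in A, (‖v y - ⨍ z in A, v z‖₊ : ℝ≥0∞)^2) +
              2 * (ENNReal.ofReal C)^2 * volume A) := by
            rw [lintegral_add_right _ measurable_const,
              lintegral_const_mul' (2 * Mu^2) _ h2Mu, lintegral_const,
              Measure.restrict_apply_univ]
        _ ≤ 2 * Mu^2 * Kv^2 + ENNReal.ofReal ((2:ℝ)^(1+γ-d)) * ωd * Mv^2 * H^2 := by
            rw [mul_add]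
            apply add_le_add
            · rw [show ENNReal.ofReal (r ^ (-γ)) *
                (2 * Mu^2 * (∫⁻ y in A, (‖v y - ⨍ z in A, v z‖₊ : ℝ≥0∞)^2)) =
                2 * Mu^2 * (ENNReal.ofReal (r ^ (-γ)) *
                  (∫⁻ y in A, (‖v y - ⨍ z in A, v z‖₊ : ℝ≥0∞)^2)) by ring]
              exact mul_le_mul_right hKv _
            · have hCC : ENNReal.ofReal C = H * ENNReal.ofReal ((2*r)^ν) * Mv := by
                rw [hCdef, ENNReal.ofReal_mul (by positivity), ENNReal.ofReal_mul (by positivity),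
                  ENNReal.ofReal_toReal hu_holder, ENNReal.ofReal_toReal hv_inf]
              have e1 : ENNReal.ofReal (r ^ (-γ)) * ENNReal.ofReal ((2*r)^ν)^2 *
                  ENNReal.ofReal (r ^ (d:ℝ)) = ENNReal.ofReal ((2:ℝ)^(γ - (d:ℝ))) := by
                rw [← ENNReal.ofReal_pow (by positivity), ← ENNReal.ofReal_mul (by positivity),
                  ← ENNReal.ofReal_mul (by positivity)]
                congr 1
                have h2r : (0:ℝ) < 2*r := by linarith
                have hν2 : ((2*r)^ν)^2 = (2*r)^(γ - (d:ℝ)) := by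
                  rw [← Real.rpow_natCast ((2*r)^ν) 2, ← Real.rpow_mul h2r.le]
                  congr 1
                  rw [hνdef]; push_cast; ring
                rw [hν2, Real.mul_rpow (by norm_num) hr0.le]
                have hrr : r ^ (-γ) * r^(γ-(d:ℝ)) * r^((d:ℝ)) = 1 := by
                  rw [← Real.rpow_add hr0, ← Real.rpow_add hr0,
                    show -γ + (γ - (d:ℝ)) + (d:ℝ) = 0 by ring, Real.rpow_zero]
                calc r ^ (-γ) * ((2:ℝ)^(γ-(d:ℝ)) * r^(γ-(d:ℝ))) * r^((d:ℝ))
                    = (2:ℝ)^(γ-(d:ℝ)) * (r ^ (-γ) * r^(γ-(d:ℝ)) * r^((d:ℝ))) := by ring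
                _ = (2:ℝ)^(γ-(d:ℝ)) := by rw [hrr, mul_one]
              have e2 : ENNReal.ofReal ((2:ℝ)^(1+γ-(d:ℝ))) =
                  2 * ENNReal.ofReal ((2:ℝ)^(γ-(d:ℝ))) := by
                rw [show (1+γ-(d:ℝ)) = 1 + (γ-(d:ℝ)) by ring, Real.rpow_add two_pos,
                  Real.rpow_one, ENNReal.ofReal_mul (by norm_num)]
                norm_num
              calc ENNReal.ofReal (r ^ (-γ)) * (2 * (ENNReal.ofReal C)^2 * volume A)
                  ≤ ENNReal.ofReal (r ^ (-γ)) *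
                    (2 * (ENNReal.ofReal C)^2 * (ENNReal.ofReal (r ^ (d:ℝ)) * ωd)) :=
                    mul_le_mul_right (mul_le_mul_right hvolA _) _
              _ = 2 * H^2 * Mv^2 * ωd * (ENNReal.ofReal (r ^ (-γ)) *
                    ENNReal.ofReal ((2*r)^ν)^2 * ENNReal.ofReal (r ^ (d:ℝ))) := by
                  rw [hCC]; ring
              _ = ENNReal.ofReal ((2:ℝ)^(1+γ-d)) * ωd * Mv^2 * H^2 := by
                  rw [e1, e2]; push_cast; ring
        _ ≤ _ := le_self_add
    · -- case 1/2 < r : crude bound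
      have hproj := lintegral_sq_sub_average_le (volume.restrict A) hfA
      have hbd : ∫⁻ y in A, (‖u y * v y‖₊ : ℝ≥0∞)^2 ≤ Mu^2 * Mv^2 * volume A := by
        calc ∫⁻ y in A, (‖u y * v y‖₊ : ℝ≥0∞)^2
            ≤ ∫⁻ _y in A, Mu^2 * Mv^2 := by
              apply lintegral_mono_ae
              filter_upwards [hub, hvb] with y h1 h2
              calc (‖u y * v y‖₊ : ℝ≥0∞)^2
                  = ((‖u y‖₊ : ℝ≥0∞) * (‖v y‖₊ : ℝ≥0∞))^2 := by
                    rw [nnnorm_mul]; push_cast; ring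
              _ ≤ (Mu * Mv)^2 := pow_le_pow_left' (mul_le_mul' h1 h2) 2
              _ = Mu^2 * Mv^2 := mul_pow _ _ _
        _ = Mu^2 * Mv^2 * volume A := by rw [lintegral_const, Measure.restrict_apply_univ]
      have hfinal : ENNReal.ofReal (r ^ (-γ)) * ENNReal.ofReal (r ^ (d:ℝ)) ≤
          ENNReal.ofReal ((2:ℝ)^γ) := by
        rw [← ENNReal.ofReal_mul (by positivity)]
        apply ENNReal.ofReal_le_ofReal
        have hdg : r ^ (-γ) * r^((d:ℝ)) = r^((d:ℝ)-γ) := by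
          rw [← Real.rpow_add hr0]; congr 1; ring
        rw [hdg]
        calc r^((d:ℝ)-γ) ≤ (1/2:ℝ)^((d:ℝ)-γ) :=
              Real.rpow_le_rpow_of_nonpos (by norm_num) hhalf.le (by linarith)
        _ = (2:ℝ)^(γ-(d:ℝ)) := by
            rw [one_div, Real.inv_rpow (by norm_num), ← Real.rpow_neg (by norm_num)]
            congr 1; ring
        _ ≤ (2:ℝ)^γ := Real.rpow_le_rpow_of_exponent_le one_le_two
            (by linarith [Nat.cast_nonneg (α := ℝ) d])
      calc ENNReal.ofReal (r ^ (-γ)) *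
            (∫⁻ y in A, (‖u y * v y - ⨍ z in A, u z * v z‖₊ : ℝ≥0∞) ^ 2)
          ≤ ENNReal.ofReal (r ^ (-γ)) * (Mu^2 * Mv^2 * volume A) :=
            mul_le_mul_right (hproj.trans hbd) _
        _ ≤ ENNReal.ofReal (r ^ (-γ)) * (Mu^2 * Mv^2 * (ENNReal.ofReal (r ^ (d:ℝ)) * ωd)) :=
            mul_le_mul_right (mul_le_mul_right hvolA _) _
        _ = Mu^2 * Mv^2 * ωd * (ENNReal.ofReal (r ^ (-γ)) * ENNReal.ofReal (r ^ (d:ℝ))) := by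
            ring
        _ ≤ Mu^2 * Mv^2 * ωd * ENNReal.ofReal ((2:ℝ)^γ) := mul_le_mul_right hfinal _
        _ = ENNReal.ofReal ((2:ℝ)^γ) * ωd * Mu^2 * Mv^2 := by ring
        _ ≤ _ := le_add_self
  have hsup : campanatoSeminorm d Ω γ (fun x => u x * v x) ≤
      (ENNReal.ofReal 2 * Mu ^ 2 * Kv ^ 2 +
        ENNReal.ofReal ((2 : ℝ) ^ (1 + γ - d)) * ωd * Mv ^ 2 * H ^ 2 +
        ENNReal.ofReal ((2 : ℝ) ^ γ) * ωd * Mu ^ 2 * Mv ^ 2) ^ (1/2 : ℝ) := by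
    unfold campanatoSeminorm
    refine iSup₂_le fun x hx => iSup₂_le fun r hr => ?_
    exact ENNReal.rpow_le_rpow (key x hx r hr) (by norm_num)
  calc campanatoSeminorm d Ω γ (fun x => u x * v x) ^ 2
      ≤ ((ENNReal.ofReal 2 * Mu ^ 2 * Kv ^ 2 +
        ENNReal.ofReal ((2 : ℝ) ^ (1 + γ - d)) * ωd * Mv ^ 2 * H ^ 2 +
        ENNReal.ofReal ((2 : ℝ) ^ γ) * ωd * Mu ^ 2 * Mv ^ 2) ^ (1/2 : ℝ)) ^ 2 :=
        pow_le_pow_left' hsup 2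
    _ = _ := by
        rw [← ENNReal.rpow_natCast _ 2, ← ENNReal.rpow_mul]
        norm_num
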